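/- Let X₁, X₂ and Y be Banach spaces, let X = X₁ ⊕_∞ X₂, and let T : X → Y be a bounded linear operator. If T is a strong Daugavet operator, then the restrictions T₁ and T₂ of T to X₁ and X₂ are strong Daugavet operators. -/

import Mathlib

/-- A bounded linear operator `T : X → Y` is a *strong Daugavet operator* if for every
`x, y` in the unit sphere of `X` and every `ε > 0` there is `z` in the unit sphere with
`‖x + z‖ ≥ 2 - ε` and `‖T (y - z)‖ ≤ ε`. -/
def IsStrongDaugavet {X Y : Type*} [NormedAddCommGroup X] [NormedSpace ℝ X]
    [NormedAddCommGroup Y] [NormedSpace ℝ Y] (T : X →L[ℝ] Y) : Prop :=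
  ∀ x y : X, ‖x‖ = 1 → ‖y‖ = 1 → ∀ ε : ℝ, 0 < ε →
    ∃ z : X, ‖z‖ = 1 ∧ 2 - ε ≤ ‖x + z‖ ∧ ‖T (y - z)‖ ≤ ε

set_option maxHeartbeats 2000000 in
lemma aux_restriction {A B X Y : Type*}
    [NormedAddCommGroup A] [NormedSpace ℝ A]
    [NormedAddCommGroup B] [NormedSpace ℝ B]
    [NormedAddCommGroup X] [NormedSpace ℝ X]
    [NormedAddCommGroup Y] [NormedSpace ℝ Y]
    (T : X →L[ℝ] Y) (T₁ : A →L[ℝ] Y) (ι : (A × B) ≃ₗ[ℝ] X)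
    (hnorm : ∀ p : A × B, ‖ι p‖ = max ‖p.1‖ ‖p.2‖)
    (hT₁ : ∀ a : A, T₁ a = T (ι (a, 0)))
    (hT : IsStrongDaugavet T) : IsStrongDaugavet T₁ := by
  intro x₁ y₁ hx hy ε hε
  obtain ⟨m, hm⟩ := exists_nat_ge (2 * ‖T‖ / ε)
  set n : ℕ := max m 1 with hn
  have hn1 : (1:ℝ) ≤ (n:ℝ) := by
    have : 1 ≤ n := Nat.le_max_right m 1
    exact_mod_cast this
  have hnpos : (0:ℝ) < (n:ℝ) := by linarith
  have hmn : (m:ℝ) ≤ (n:ℝ) := by exact_mod_cast Nat.le_max_left m 1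
  have hTn : ‖T‖ / (n:ℝ) ≤ ε / 2 := by
    rw [div_le_div_iff₀ hnpos two_pos]
    have h1 : 2 * ‖T‖ / ε ≤ (n:ℝ) := le_trans hm hmn
    rw [div_le_iff₀ hε] at h1
    linarith
  set N2 : ℝ := (n:ℝ)^2 with hN2def
  have hN2pos : 0 < N2 := by positivity
  have hN21 : 1 ≤ N2 := by nlinarith
  have hTpos : (0:ℝ) < 1 + ‖T‖ * N2 := by positivity
  set δ : ℝ := min (ε/(2*N2)) (min (1/(2*N2)) (ε/(4*(1+‖T‖*N2)))) with hδdef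
  have hδpos : 0 < δ := by
    apply lt_min (by positivity) (lt_min (by positivity) (by positivity))
  have hδ1 : δ ≤ ε/(2*N2) := min_le_left _ _
  have hδ2 : δ ≤ 1/(2*N2) := le_trans (min_le_right _ _) (min_le_left _ _)
  have hδ3 : δ ≤ ε/(4*(1+‖T‖*N2)) := le_trans (min_le_right _ _) (min_le_right _ _)
  have hN2δ : N2 * δ ≤ 1/2 := by
    rw [le_div_iff₀ (by positivity)] at hδ2
    nlinarith
  have hN2δε : 2 * (N2 * δ) ≤ ε := by
    rw [le_div_iff₀ (by positivity)] at hδ1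
    nlinarith
  have hδlt1 : δ < 1 := by nlinarith
  have key : ∀ k : ℕ, (k:ℝ) ≤ (n:ℝ) → ∃ (w : A) (b : B), ‖b‖ ≤ 1 ∧ ‖w‖ ≤ (k:ℝ) ∧
      (k:ℝ) + 1 - (k:ℝ)^2 * δ ≤ ‖x₁ + w‖ ∧ ‖T (ι ((k:ℝ) • y₁ - w, -b))‖ ≤ (k:ℝ) * δ := by
    intro k
    induction k with
    | zero =>
      intro _
      refine ⟨0, 0, by simp, by simp, by simp [hx], by simp [Prod.mk_zero_zero]⟩
    | succ k ih =>
      intro hk1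
      have hkn : (k:ℝ) ≤ (n:ℝ) := by push_cast at hk1; linarith
      obtain ⟨w, b, hb, hw, hxw, hTw⟩ := ih hkn
      have hk2δ : (k:ℝ)^2 * δ ≤ (k:ℝ) := by
        have hkk : (k:ℝ)^2 * δ ≤ N2 * δ := by
          have h1 : (k:ℝ)^2 ≤ N2 := by
            rw [hN2def]
            exact pow_le_pow_left₀ (Nat.cast_nonneg k) hkn 2
          nlinarith
        rcases Nat.eq_zero_or_pos k with hk0 | hk0
        · subst hk0; simp
        · have : (1:ℝ) ≤ (k:ℝ) := by exact_mod_cast hk0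
          linarith
      set u := x₁ + w with hu
      set r := ‖u‖ with hr
      have hr1 : (1:ℝ) ≤ r := by rw [hr]; linarith
      have hrpos : (0:ℝ) < r := by linarith
      have hrk : r ≤ (k:ℝ) + 1 := by
        rw [hr, hu]
        calc ‖x₁ + w‖ ≤ ‖x₁‖ + ‖w‖ := norm_add_le _ _
          _ ≤ (k:ℝ) + 1 := by rw [hx]; linarith
      have hxnorm : ‖ι (r⁻¹ • u, (0:B))‖ = 1 := by
        rw [hnorm]
        have hsm : ‖r⁻¹ • u‖ = 1 := by
          rw [norm_smul, Real.norm_eq_abs, abs_of_pos (inv_pos.mpr hrpos), ← hr, inv_mul_cancel₀ hrpos.ne']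
        simp [hsm]
      have hynorm : ‖ι (y₁, b)‖ = 1 := by
        rw [hnorm]
        simp [hy, max_eq_left hb]
      obtain ⟨z, hz1, hz2, hz3⟩ := hT _ _ hxnorm hynorm δ hδpos
      set z₁ := (ι.symm z).1 with hz₁def
      set z₂ := (ι.symm z).2 with hz₂def
      have hzdecomp : z = ι (z₁, z₂) := by
        rw [hz₁def, hz₂def]
        simp
      have hz1norm : ‖z₁‖ ≤ 1 := by
        have h := hnorm (z₁, z₂)
        rw [← hzdecomp, hz1] at h
        have := le_max_left ‖z₁‖ ‖z₂‖
        linarith [h ▸ this]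
      have hz2norm : ‖z₂‖ ≤ 1 := by
        have h := hnorm (z₁, z₂)
        rw [← hzdecomp, hz1] at h
        have := le_max_right ‖z₁‖ ‖z₂‖
        linarith [h ▸ this]
      have hsum : ι (r⁻¹ • u, (0:B)) + z = ι (r⁻¹ • u + z₁, z₂) := by
        rw [hzdecomp, ← map_add, Prod.mk_add_mk, zero_add]
      have hmax : 2 - δ ≤ max ‖r⁻¹ • u + z₁‖ ‖z₂‖ := by
        have := hnorm (r⁻¹ • u + z₁, z₂)
        rw [← hsum] at this
        rw [← this]
        exact hz2
      have hbig : 2 - δ ≤ ‖r⁻¹ • u + z₁‖ := by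
        rcases le_max_iff.mp hmax with h | h
        · exact h
        · linarith
      have hux : r + 1 - r * δ ≤ ‖u + z₁‖ := by
        have hrepr : u + z₁ = r • (r⁻¹ • u + z₁) - (r - 1) • z₁ := by
          rw [smul_add, smul_smul, mul_inv_cancel₀ hrpos.ne', one_smul, sub_smul, one_smul]
          abel
        rw [hrepr]
        have h1 : ‖r • (r⁻¹ • u + z₁)‖ = r * ‖r⁻¹ • u + z₁‖ := by
          rw [norm_smul, Real.norm_eq_abs, abs_of_pos hrpos]
        have h2 : ‖(r - 1) • z₁‖ ≤ r - 1 := by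
          rw [norm_smul, Real.norm_eq_abs, abs_of_nonneg (by linarith)]
          nlinarith
        have h3 := norm_sub_norm_le (r • (r⁻¹ • u + z₁)) ((r-1) • z₁)
        rw [h1] at h3
        nlinarith [mul_le_mul_of_nonneg_left hbig hrpos.le]
      refine ⟨w + z₁, z₂, hz2norm, ?_, ?_, ?_⟩
      · push_cast
        calc ‖w + z₁‖ ≤ ‖w‖ + ‖z₁‖ := norm_add_le _ _
          _ ≤ (k:ℝ) + 1 := by linarith
      · push_cast
        have heq : x₁ + (w + z₁) = u + z₁ := by rw [hu]; abel
        rw [heq]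
        have hrb : r * δ ≤ ((k:ℝ) + 1) * δ := by nlinarith
        nlinarith
      · push_cast
        have hpair : (((k:ℝ)+1) • y₁ - (w + z₁), -z₂)
            = (((k:ℝ) • y₁ - w, -b) : A × B) + ((y₁, b) - (z₁, z₂)) := by
          simp only [Prod.mk_sub_mk, Prod.mk_add_mk, Prod.mk.injEq]
          constructor
          · rw [add_smul, one_smul]; abel
          · abel
        have hιeq : ι (((k:ℝ)+1) • y₁ - (w + z₁), -z₂)
            = ι ((k:ℝ) • y₁ - w, -b) + (ι (y₁, b) - z) := by
          rw [hzdecomp, ← map_sub, ← map_add, hpair]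
        rw [hιeq, map_add]
        calc ‖T (ι ((k:ℝ) • y₁ - w, -b)) + T (ι (y₁, b) - z)‖
            ≤ ‖T (ι ((k:ℝ) • y₁ - w, -b))‖ + ‖T (ι (y₁, b) - z)‖ := norm_add_le _ _
          _ ≤ ((k:ℝ) + 1) * δ := by linarith
  obtain ⟨w, b, hb, hw, hxw, hTw⟩ := key n le_rfl
  set zb : A := (n:ℝ)⁻¹ • w with hzb
  have hinv : (0:ℝ) < (n:ℝ)⁻¹ := inv_pos.mpr hnpos
  have hzbnorm : ‖zb‖ ≤ 1 := by
    rw [hzb, norm_smul, Real.norm_eq_abs, abs_of_pos hinv]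
    calc (n:ℝ)⁻¹ * ‖w‖ ≤ (n:ℝ)⁻¹ * (n:ℝ) := mul_le_mul_of_nonneg_left hw hinv.le
      _ = 1 := inv_mul_cancel₀ hnpos.ne'
  have hwzb : w = (n:ℝ) • zb := by
    rw [hzb, smul_smul, mul_inv_cancel₀ hnpos.ne', one_smul]
  have hx1zb : 2 - N2 * δ ≤ ‖x₁ + zb‖ := by
    have heq : x₁ + w = (x₁ + zb) + ((n:ℝ)-1) • zb := by
      rw [hwzb, sub_smul, one_smul]; abel
    have h2 : ‖((n:ℝ)-1) • zb‖ ≤ (n:ℝ) - 1 := by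
      rw [norm_smul, Real.norm_eq_abs, abs_of_nonneg (by linarith)]
      nlinarith
    have h3 : ‖x₁ + w‖ ≤ ‖x₁ + zb‖ + ‖((n:ℝ)-1) • zb‖ := by
      rw [heq]; exact norm_add_le _ _
    rw [hN2def]
    linarith
  set c := ‖zb‖ with hc
  have hc1 : 1 - N2 * δ ≤ c := by
    have := norm_add_le x₁ zb
    rw [hx] at this
    linarith
  have hcpos : 0 < c := by linarith
  set z : A := c⁻¹ • zb with hzdef
  have hznorm : ‖z‖ = 1 := by
    rw [hzdef, norm_smul, Real.norm_eq_abs, abs_of_pos (inv_pos.mpr hcpos), ← hc, inv_mul_cancel₀ hcpos.ne']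
  have hzzb : ‖z - zb‖ ≤ N2 * δ := by
    have heq : z - zb = (c⁻¹ - 1) • zb := by rw [hzdef, sub_smul, one_smul]
    have hcle1 : c ≤ 1 := hzbnorm
    have hcinv : 1 ≤ c⁻¹ := (one_le_inv_iff₀).mpr ⟨hcpos, hcle1⟩
    rw [heq, norm_smul, Real.norm_eq_abs, abs_of_nonneg (by linarith)]
    have : (c⁻¹ - 1) * c = 1 - c := by field_simp
    rw [this]; linarith
  refine ⟨z, hznorm, ?_, ?_⟩
  · have heq : x₁ + zb = (x₁ + z) - (z - zb) := by abel
    have h := norm_sub_le (x₁ + z) (z - zb)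
    rw [← heq] at h
    linarith
  · have hy1zb : (n:ℝ) • (y₁ - zb) = (n:ℝ) • y₁ - w := by
      rw [smul_sub, hwzb]
    have hdecomp : ι ((n:ℝ) • y₁ - w, (0:B)) = ι ((n:ℝ) • y₁ - w, -b) + ι (0, b) := by
      rw [← map_add, Prod.mk_add_mk, add_zero, neg_add_cancel]
    have hT1zb : (n:ℝ) • T₁ (y₁ - zb) = T (ι ((n:ℝ) • y₁ - w, (0:B))) := by
      rw [hT₁, ← map_smul T, ← map_smul ι, Prod.smul_mk, smul_zero, hy1zb]
    have hb2 : ‖ι ((0:A), b)‖ ≤ 1 := by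
      rw [hnorm]
      simpa using hb
    have hTb : ‖T (ι ((0:A), b))‖ ≤ ‖T‖ := by
      calc ‖T (ι ((0:A), b))‖ ≤ ‖T‖ * ‖ι ((0:A), b)‖ := T.le_opNorm _
        _ ≤ ‖T‖ * 1 := by nlinarith [norm_nonneg T]
        _ = ‖T‖ := mul_one _
    have hTzb : ‖T₁ (y₁ - zb)‖ ≤ δ + ‖T‖ / (n:ℝ) := by
      have h1 : (n:ℝ) * ‖T₁ (y₁ - zb)‖ ≤ (n:ℝ) * δ + ‖T‖ := by
        have h0 : ‖(n:ℝ) • T₁ (y₁ - zb)‖ ≤ (n:ℝ) * δ + ‖T‖ := by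
          rw [hT1zb, hdecomp, map_add]
          calc ‖T (ι ((n:ℝ) • y₁ - w, -b)) + T (ι (0, b))‖
              ≤ ‖T (ι ((n:ℝ) • y₁ - w, -b))‖ + ‖T (ι (0, b))‖ := norm_add_le _ _
            _ ≤ (n:ℝ) * δ + ‖T‖ := by linarith
        rwa [norm_smul, Real.norm_eq_abs, abs_of_pos hnpos] at h0
      have h2 : ‖T₁ (y₁ - zb)‖ ≤ ((n:ℝ) * δ + ‖T‖) / (n:ℝ) := by
        rw [le_div_iff₀ hnpos]
        nlinarith
      calc ‖T₁ (y₁ - zb)‖ ≤ ((n:ℝ) * δ + ‖T‖) / (n:ℝ) := h2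
        _ = δ + ‖T‖ / (n:ℝ) := by field_simp
    have hTsz : ‖T₁ (zb - z)‖ ≤ ‖T‖ * (N2 * δ) := by
      rw [hT₁]
      calc ‖T (ι (zb - z, (0:B)))‖ ≤ ‖T‖ * ‖ι (zb - z, (0:B))‖ := T.le_opNorm _
        _ ≤ ‖T‖ * (N2 * δ) := by
            rw [hnorm]
            have : ‖zb - z‖ ≤ N2 * δ := by rw [norm_sub_rev]; exact hzzb
            have hmax0 : max ‖zb - z‖ ‖((0:B) : B)‖ = ‖zb - z‖ := by
              simp [max_eq_left (norm_nonneg _)]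
            rw [hmax0]
            nlinarith [norm_nonneg T]
    have hsplit : T₁ (y₁ - z) = T₁ (y₁ - zb) + T₁ (zb - z) := by
      rw [← map_add]
      congr 1
      abel
    have h4 : δ * (1 + ‖T‖ * N2) ≤ ε / 4 := by
      rw [le_div_iff₀ (by positivity)] at hδ3
      linarith
    rw [hsplit]
    calc ‖T₁ (y₁ - zb) + T₁ (zb - z)‖ ≤ ‖T₁ (y₁ - zb)‖ + ‖T₁ (zb - z)‖ := norm_add_le _ _
      _ ≤ δ + ‖T‖ / (n:ℝ) + ‖T‖ * (N2 * δ) := by linarith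
      _ ≤ ε := by nlinarith

theorem restrictions_strongDaugavet_of_inftySum
    {X₁ X₂ Y : Type*}
    [NormedAddCommGroup X₁] [NormedSpace ℝ X₁] [CompleteSpace X₁]
    [NormedAddCommGroup X₂] [NormedSpace ℝ X₂] [CompleteSpace X₂]
    [NormedAddCommGroup Y] [NormedSpace ℝ Y] [CompleteSpace Y]
    (T : WithLp ⊤ (X₁ × X₂) →L[ℝ] Y)
    (T₁ : X₁ →L[ℝ] Y) (T₂ : X₂ →L[ℝ] Y)
    (hT₁ : ∀ x₁ : X₁, T₁ x₁ = T ((WithLp.prodContinuousLinearEquiv ⊤ ℝ X₁ X₂).symm (x₁, 0)))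
    (hT₂ : ∀ x₂ : X₂, T₂ x₂ = T ((WithLp.prodContinuousLinearEquiv ⊤ ℝ X₁ X₂).symm (0, x₂)))
    (hT : IsStrongDaugavet T) :
    IsStrongDaugavet T₁ ∧ IsStrongDaugavet T₂ := by
  constructor
  · refine aux_restriction T T₁ ((WithLp.linearEquiv ⊤ ℝ (X₁ × X₂)).symm) ?_ ?_ hT
    · intro p
      have : ((WithLp.linearEquiv ⊤ ℝ (X₁ × X₂)).symm p : WithLp ⊤ (X₁ × X₂))
          = (WithLp.equiv ⊤ (X₁ × X₂)).symm p := rfl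
      rw [this]
      exact (WithLp.prod_norm_toLp p).trans rfl
    · intro a
      rw [hT₁]
      rfl
  · refine aux_restriction T T₂
      ((LinearEquiv.prodComm ℝ X₂ X₁).trans (WithLp.linearEquiv ⊤ ℝ (X₁ × X₂)).symm) ?_ ?_ hT
    · intro p
      have : (((LinearEquiv.prodComm ℝ X₂ X₁).trans
            (WithLp.linearEquiv ⊤ ℝ (X₁ × X₂)).symm) p : WithLp ⊤ (X₁ × X₂))
          = (WithLp.equiv ⊤ (X₁ × X₂)).symm (p.2, p.1) := rfl
      rw [this]
      exact (WithLp.prod_norm_toLp (p.2, p.1)).trans (max_comm _ _)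
    · intro a
      rw [hT₂]
      rfl
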